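/- Every flexible g-alternative algebra A over a field F is alternative; that is, if A satisfies Axiom 2₁, Axiom 2₂, and (yx)y = y(xy) for all x, y ∈ A, then x²y = x(xy) and yx² = (yx)x for all x, y ∈ A. -/

import Mathlib

/-- Every flexible g-alternative algebra over a field `F` is alternative. -/
theorem flexible_g_alternative_is_alternative (F : Type*) [Field F] (A : Type*)
    [NonUnitalNonAssocRing A] [Module F A] [SMulCommClass F A A] [IsScalarTower F A A]
    (h1 : ∀ x y z : A, x * (y * z) = (x * y) * z + (y * x) * z - y * (x * z))
    (h2 : ∀ x y z : A, (x * y) * z = x * (y * z) + x * (z * y) - (x * z) * y)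
    (hflex : ∀ x y : A, (y * x) * y = y * (x * y)) :
    (∀ x y : A, (x * x) * y = x * (x * y)) ∧
    (∀ x y : A, y * (x * x) = (y * x) * x) := by
  constructor
  · intro x y
    have := h2 x y x
    rw [hflex y x, add_sub_assoc, left_eq_add, sub_eq_zero] at this
    exact this.symm
  · intro x y
    have := h1 x y x
    rw [hflex y x] at this
    nth_rewrite 1 [← add_zero (x * (y * x))] at this
    rw [add_sub_assoc, add_right_inj, eq_comm, sub_eq_zero] at this
    exact this.symm
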